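/- (Higher-order Lagrange–Poincaré equations for a trivial principal bundle characterize critical points.) Let n, k ≥ 1, t₀ < t₁, let 𝔤 be a finite-dimensional real Lie algebra, and let L : (Fin (k+1) → ℝ^n) × (Fin k → 𝔤) → ℝ be smooth; write ∂^m_rL (0 ≤ r ≤ k) for the partial Fréchet derivatives in the ℝ^n slots and ∂^ξ_rL (1 ≤ r ≤ k) for those in the 𝔤 slots. Let m : ℝ → ℝ^n and ξ : ℝ → 𝔤 be smooth, and set X(t) := (jet_k m(t), Jξ(t)). Then the following are equivalent: (a) for every smooth h : ℝ → ℝ^n and σ : ℝ → 𝔤 whose derivatives of orders 0,…,k−1 all vanish at t₀ and t₁, ∫_{t₀}^{t₁} [ ∑_{r=0}^{k} ∂^m_rL(X(t))(h^{(r)}(t)) + ∑_{r=1}^{k} ∂^ξ_rL(X(t))((σ' + [ξ,σ])^{(r−1)}(t)) ] dt = 0; (b) for all t ∈ [t₀,t₁]: ∑_{r=0}^{k} (−1)^r D^r[t ↦ ∂^m_rL(X(t))](t) = 0 in (ℝ^n →ₗ[ℝ] ℝ), and π'(t)(η) = π(t)([ξ(t), η]) for all η ∈ 𝔤, where π(t)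 := ∑_{r=1}^{k} (−1)^{r−1} D^{r−1}[t ↦ ∂^ξ_rL(X(t))](t) ∈ 𝔤*. -/

import Mathlib

noncomputable section

/-- The `k`-jet of a curve: slot `r` holds the `r`-th derivative. -/
def jet {E : Type*} [NormedAddCommGroup E] [NormedSpace ℝ E] (k : ℕ) (q : ℝ → E) (t : ℝ) :
    Fin (k + 1) → E := fun r => iteratedDeriv r q t

/-- The reduced `k`-jet of a curve: slot `i` (Lean indexing `0,…,k-1`, i.e. the paper's
slot `r = i+1`) holds the `i`-th derivative. -/
def rjet {E : Type*} [NormedAddCommGroup E] [NormedSpace ℝ E] (k : ℕ) (q : ℝ → E) (t : ℝ) :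
    Fin k → E := fun i => iteratedDeriv i q t

/-- Partial Fréchet derivative in the `r`-th slot of the first (base) factor of a map
defined on `(Fin (k+1) → E) × (Fin k → G)` (zero junk value for `r ≥ k+1`). -/
def pdBase {k : ℕ} {E G : Type*} [NormedAddCommGroup E] [NormedSpace ℝ E]
    [NormedAddCommGroup G] [NormedSpace ℝ G]
    (L : (Fin (k + 1) → E) × (Fin k → G) → ℝ) (r : ℕ)
    (X : (Fin (k + 1) → E) × (Fin k → G)) : E →L[ℝ] ℝ :=
  if h : r < k + 1 then
    (fderiv ℝ L X).comp
      ((ContinuousLinearMap.inl ℝ (Fin (k + 1) → E) (Fin k → G)).comp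
        (ContinuousLinearMap.pi
          (Pi.single (⟨r, h⟩ : Fin (k + 1)) (ContinuousLinearMap.id ℝ E))))
  else 0

/-- Partial Fréchet derivative in the `i`-th slot of the second (Lie algebra) factor of a
map defined on `(Fin (k+1) → E) × (Fin k → G)` (zero junk value for `i ≥ k`); Lean index
`i` corresponds to the paper's slot `r = i+1`. -/
def pdFib {k : ℕ} {E G : Type*} [NormedAddCommGroup E] [NormedSpace ℝ E]
    [NormedAddCommGroup G] [NormedSpace ℝ G]
    (L : (Fin (k + 1) → E) × (Fin k → G) → ℝ) (i : ℕ)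
    (X : (Fin (k + 1) → E) × (Fin k → G)) : G →L[ℝ] ℝ :=
  if h : i < k then
    (fderiv ℝ L X).comp
      ((ContinuousLinearMap.inr ℝ (Fin (k + 1) → E) (Fin k → G)).comp
        (ContinuousLinearMap.pi
          (Pi.single (⟨i, h⟩ : Fin k) (ContinuousLinearMap.id ℝ G))))
  else 0

open scoped ContDiff
open MeasureTheory Set

section VarAux


variable {E : Type*} [NormedAddCommGroup E] [NormedSpace ℝ E]

lemma one_le_infty' : ((1 : ℕ∞) : WithTop ℕ∞) ≤ ∞ := by exact_mod_cast le_top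

lemma ibp_once {f : ℝ → E →L[ℝ] ℝ} {u : ℝ → E} (hf : ContDiff ℝ ∞ f) (hu : ContDiff ℝ ∞ u)
    (a b : ℝ) :
    ∫ t in a..b, (deriv f t (u t) + f t (deriv u t)) = f b (u b) - f a (u a) := by
  apply intervalIntegral.integral_eq_sub_of_hasDerivAt
  · intro t _
    exact ((hf.differentiable (by simp) t).hasDerivAt).clm_apply
      ((hu.differentiable (by simp) t).hasDerivAt)
  · apply Continuous.intervalIntegrable
    exact ((hf.continuous_deriv one_le_infty').clm_apply hu.continuous).add
      (hf.continuous.clm_apply (hu.continuous_deriv one_le_infty'))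

lemma smooth_iteratedDeriv' {f : ℝ → E} (hf : ContDiff ℝ ∞ f) (n : ℕ) :
    ContDiff ℝ ∞ (iteratedDeriv n f) := by
  rw [iteratedDeriv_eq_iterate]; exact hf.iterate_deriv n

lemma ibp_iter (a b : ℝ) (r : ℕ) (f : ℝ → E →L[ℝ] ℝ) (u : ℝ → E)
    (hf : ContDiff ℝ ∞ f) (hu : ContDiff ℝ ∞ u)
    (hvan : ∀ j < r, iteratedDeriv j u a = 0 ∧ iteratedDeriv j u b = 0) :
    ∫ t in a..b, f t (iteratedDeriv r u t)
      = (-1 : ℝ) ^ r • ∫ t in a..b, iteratedDeriv r f t (u t) := by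
  induction r generalizing f with
  | zero => simp [iteratedDeriv_zero]
  | succ r ih =>
    have hf' : ContDiff ℝ ∞ (deriv f) := (contDiff_infty_iff_deriv.mp hf).2
    have hur : ContDiff ℝ ∞ (iteratedDeriv r u) := smooth_iteratedDeriv' hu r
    have h0 := ibp_once hf hur a b
    rw [(hvan r (Nat.lt_succ_self r)).2, (hvan r (Nat.lt_succ_self r)).1] at h0
    simp only [map_zero, sub_zero] at h0
    have hint1 : IntervalIntegrable (fun t => deriv f t (iteratedDeriv r u t)) volume a b :=
      ((hf.continuous_deriv one_le_infty').clm_apply hur.continuous).intervalIntegrable a b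
    have hint2 : IntervalIntegrable (fun t => f t (deriv (iteratedDeriv r u) t)) volume a b :=
      (hf.continuous.clm_apply (hur.continuous_deriv one_le_infty')).intervalIntegrable a b
    rw [intervalIntegral.integral_add hint1 hint2] at h0
    have key : ∫ t in a..b, f t (iteratedDeriv (r+1) u t)
        = - ∫ t in a..b, deriv f t (iteratedDeriv r u t) := by
      rw [iteratedDeriv_succ]; linarith
    rw [key, ih (deriv f) hf' (fun j hj => hvan j (hj.trans (Nat.lt_succ_self r)))]
    rw [← iteratedDeriv_succ']
    rw [pow_succ]
    simp only [smul_eq_mul]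
    ring

variable {F G : Type*} [NormedAddCommGroup F] [NormedSpace ℝ F]
  [NormedAddCommGroup G] [NormedSpace ℝ G]

lemma iteratedDeriv_add_apply'' {n : ℕ} {f g : ℝ → E} (hf : ContDiff ℝ ∞ f)
    (hg : ContDiff ℝ ∞ g) (a : ℝ) :
    iteratedDeriv n (fun x => f x + g x) a = iteratedDeriv n f a + iteratedDeriv n g a := by
  simp only [← iteratedDerivWithin_univ]
  exact iteratedDerivWithin_add (Set.mem_univ a) uniqueDiffOn_univ
    (hf.of_le (by exact_mod_cast le_top)).contDiffWithinAt
    (hg.of_le (by exact_mod_cast le_top)).contDiffWithinAt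

lemma iteratedDeriv_bilin_eq_zero (B : E →L[ℝ] F →L[ℝ] G) {a : ℝ} (j : ℕ)
    (f : ℝ → E) (g : ℝ → F) (hf : ContDiff ℝ ∞ f) (hg : ContDiff ℝ ∞ g)
    (hvan : ∀ l ≤ j, iteratedDeriv l g a = 0) :
    iteratedDeriv j (fun u => B (f u) (g u)) a = 0 := by
  induction j generalizing f g with
  | zero =>
    simp only [iteratedDeriv_zero]
    have h0 := hvan 0 le_rfl
    rw [iteratedDeriv_zero] at h0
    rw [h0, map_zero]
  | succ j ih =>
    have hf' : ContDiff ℝ ∞ (deriv f) := (contDiff_infty_iff_deriv.mp hf).2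
    have hg' : ContDiff ℝ ∞ (deriv g) := (contDiff_infty_iff_deriv.mp hg).2
    have hd : deriv (fun u => B (f u) (g u))
        = fun u => B (deriv f u) (g u) + B (f u) (deriv g u) := by
      funext u
      have h1 : HasDerivAt (fun y => B (f y)) (B (deriv f u)) u :=
        (B.hasFDerivAt).comp_hasDerivAt u ((hf.differentiable (by simp) u).hasDerivAt)
      exact (h1.clm_apply ((hg.differentiable (by simp) u).hasDerivAt)).deriv
    rw [iteratedDeriv_succ', hd]
    have hs1 : ContDiff ℝ ∞ (fun u => B (deriv f u) (g u)) :=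
      ((B.contDiff).comp hf').clm_apply hg
    have hs2 : ContDiff ℝ ∞ (fun u => B (f u) (deriv g u)) :=
      ((B.contDiff).comp hf).clm_apply hg'
    rw [iteratedDeriv_add_apply'' hs1 hs2 a]
    rw [ih (deriv f) g hf' hg (fun l hl => hvan l (hl.trans j.le_succ)),
      ih f (deriv g) hf hg' (fun l hl => by
        rw [← iteratedDeriv_succ']
        exact hvan (l+1) (Nat.succ_le_succ hl))]
    simp

lemma eventuallyEq_zero_iteratedDeriv {f : ℝ → E} {a : ℝ} (h : f =ᶠ[nhds a] 0) (n : ℕ) :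
    iteratedDeriv n f a = 0 := by
  have H : ∀ n : ℕ, iteratedDeriv n f =ᶠ[nhds a] 0 := by
    intro n
    induction n with
    | zero => simpa [iteratedDeriv_zero] using h
    | succ n ih =>
      rw [iteratedDeriv_succ]
      have h2 := ih.deriv
      have : deriv (0 : ℝ → E) = 0 := by funext x; simp [Pi.zero_def]
      rwa [this] at h2
  exact (H n).eq_of_nhds

lemma flcv_key {a b : ℝ} (hab : a < b) (g : ℝ → ℝ) (hg : Continuous g)
    (H : ∀ φ : ℝ → ℝ, ContDiff ℝ ∞ φ →
      (∀ j : ℕ, iteratedDeriv j φ a = 0 ∧ iteratedDeriv j φ b = 0) →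
      ∫ t in a..b, φ t * g t = 0) :
    ∀ s ∈ Set.Ioo a b, g s ≤ 0 := by
  intro s hs
  by_contra hpos
  push_neg at hpos
  set U : Set ℝ := Set.Ioo a b ∩ g ⁻¹' (Set.Ioi (g s / 2)) with hU
  have hUopen : IsOpen U := (isOpen_Ioo).inter (isOpen_Ioi.preimage hg)
  have hsU : s ∈ U := ⟨hs, by simp; linarith⟩
  obtain ⟨ε, hε, hball⟩ := Metric.isOpen_iff.mp hUopen s hsU
  set bump : ContDiffBump s := ⟨ε/2, 3*ε/4, by linarith, by linarith⟩ with hbump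
  have hsupp : tsupport (⇑bump) ⊆ U := by
    rw [bump.tsupport_eq]
    exact (Metric.closedBall_subset_ball (by simp [hbump]; linarith)).trans hball
  have hvan : ∀ j : ℕ, iteratedDeriv j (⇑bump) a = 0 ∧ iteratedDeriv j (⇑bump) b = 0 := by
    intro j
    constructor <;>
      [ (have ha' : a ∉ tsupport (⇑bump) := fun hmem => (hsupp hmem).1.1.false);
        (have hb' : b ∉ tsupport (⇑bump) := fun hmem => (hsupp hmem).1.2.false)]
    · exact eventuallyEq_zero_iteratedDeriv (notMem_tsupport_iff_eventuallyEq.mp ha') j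
    · exact eventuallyEq_zero_iteratedDeriv (notMem_tsupport_iff_eventuallyEq.mp hb') j
  have hzero := H (⇑bump) bump.contDiff hvan
  -- lower bound by (g s / 2) * bump
  have hmono : ∀ t ∈ Set.Icc a b, g s / 2 * bump t ≤ bump t * g t := by
    intro t _
    rcases eq_or_ne (bump t) 0 with h0 | h0
    · simp [h0]
    · have htsup : t ∈ U := by
        apply hball
        apply Metric.ball_subset_ball (by linarith : 3*ε/4 ≤ ε)
        rw [← bump.support_eq]
        exact Function.mem_support.mpr h0
      have hgt : g s / 2 < g t := htsup.2
      have hbpos : 0 < bump t := lt_of_le_of_ne bump.nonneg (Ne.symm h0)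
      rw [mul_comm (bump t) (g t)]
      exact mul_le_mul_of_nonneg_right hgt.le bump.nonneg |>.trans_eq rfl
  have hint1 : IntervalIntegrable (fun t => g s / 2 * bump t) volume a b :=
    ((continuous_const.mul bump.continuous)).intervalIntegrable a b
  have hint2 : IntervalIntegrable (fun t => bump t * g t) volume a b :=
    (bump.continuous.mul hg).intervalIntegrable a b
  have hle := intervalIntegral.integral_mono_on hab.le hint1 hint2 hmono
  rw [hzero] at hle
  rw [intervalIntegral.integral_const_mul] at hle
  -- now show ∫ bump > 0
  have hIccsub : Set.Icc (s - ε/2) (s + ε/2) ⊆ Set.Ioo a b := by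
    intro t ht
    have : t ∈ Metric.ball s ε := by
      rw [Real.ball_eq_Ioo]
      constructor
      · linarith [ht.1]
      · linarith [ht.2]
    exact (hball this).1
  have h1 : a ≤ s - ε/2 := (hIccsub (by constructor <;> linarith)).1.le
  have h2 : s + ε/2 ≤ b := (hIccsub (by constructor <;> linarith)).2.le
  have hmid : ∫ t in (s - ε/2)..(s + ε/2), bump t = ε := by
    rw [intervalIntegral.integral_congr (g := fun _ => (1:ℝ))
      (by
        intro t ht
        rw [Set.uIcc_of_le (by linarith)] at ht
        exact bump.one_of_mem_closedBall (by rw [Real.closedBall_eq_Icc]; exact ht))]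
    simp only [intervalIntegral.integral_const, smul_eq_mul, mul_one]
    ring
  have hsub : ∫ t in (s - ε/2)..(s + ε/2), bump t ≤ ∫ t in a..b, bump t := by
    apply intervalIntegral.integral_mono_interval h1 (by linarith) h2
    · exact Filter.Eventually.of_forall fun t => bump.nonneg
    · exact bump.continuous.intervalIntegrable a b
  rw [hmid] at hsub
  nlinarith [bump.nonneg' s]

lemma flcv_scalar {a b : ℝ} (hab : a < b) (g : ℝ → ℝ) (hg : Continuous g)
    (H : ∀ φ : ℝ → ℝ, ContDiff ℝ ∞ φ →
      (∀ j : ℕ, iteratedDeriv j φ a = 0 ∧ iteratedDeriv j φ b = 0) →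
      ∫ t in a..b, φ t * g t = 0) :
    ∀ t ∈ Set.Icc a b, g t = 0 := by
  have hIoo : Set.EqOn g 0 (Set.Ioo a b) := by
    intro s hs
    have hle := flcv_key hab g hg H s hs
    have hge := flcv_key hab (fun t => -g t) (hg.neg) (fun φ hφ hv => by
      have h := H φ hφ hv
      show (∫ t in a..b, φ t * -g t) = 0
      have he : (∫ t in a..b, φ t * -g t) = ∫ t in a..b, -(φ t * g t) :=
        intervalIntegral.integral_congr (fun t _ => by ring)
      rw [he, intervalIntegral.integral_neg, h, neg_zero]) s hs
    simp only [Pi.zero_apply]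
    simp at hge
    linarith
  intro t ht
  have := hIoo.closure hg continuous_const
  rw [closure_Ioo hab.ne] at this
  exact this ht

lemma iteratedDeriv_smul_const'' (v : E) (n : ℕ) :
    ∀ (ψ : ℝ → ℝ), ContDiff ℝ ∞ ψ → ∀ t : ℝ,
      iteratedDeriv n (fun s => ψ s • v) t = iteratedDeriv n ψ t • v := by
  induction n with
  | zero => intro ψ hψ t; simp
  | succ n ih =>
    intro ψ hψ t
    rw [iteratedDeriv_succ', iteratedDeriv_succ']
    have hd : deriv (fun s => ψ s • v) = fun s => deriv ψ s • v := by
      funext s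
      exact deriv_smul_const ((hψ.differentiable (by simp)) s) v
    rw [hd]
    exact ih (deriv ψ) ((contDiff_infty_iff_deriv.mp hψ).2) t

lemma flcv_clm {a b : ℝ} (hab : a < b) {F : ℝ → E →L[ℝ] ℝ} (hF : Continuous F) (k : ℕ)
    (H : ∀ h : ℝ → E, ContDiff ℝ ∞ h →
      (∀ j < k, iteratedDeriv j h a = 0 ∧ iteratedDeriv j h b = 0) →
      ∫ t in a..b, F t (h t) = 0) :
    ∀ t ∈ Set.Icc a b, F t = 0 := by
  intro t ht
  ext v
  simp only [ContinuousLinearMap.zero_apply]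
  refine flcv_scalar hab (fun u => F u v) (hF.clm_apply continuous_const) ?_ t ht
  intro φ hφ hvan
  have hh := H (fun s => φ s • v) (hφ.smul contDiff_const) (fun j _ =>
    ⟨by rw [iteratedDeriv_smul_const'' v j φ hφ a, (hvan j).1, zero_smul],
     by rw [iteratedDeriv_smul_const'' v j φ hφ b, (hvan j).2, zero_smul]⟩)
  have he : (∫ s in a..b, φ s * F s v) = ∫ s in a..b, F s (φ s • v) :=
    intervalIntegral.integral_congr (fun s _ => by simp [smul_eq_mul])
  rw [he, hh]

lemma variational_iff {G : Type*} [NormedAddCommGroup G] [NormedSpace ℝ G]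
    (k : ℕ) (hk : 1 ≤ k) (t₀ t₁ : ℝ) (ht : t₀ < t₁)
    (A : ℕ → ℝ → E →L[ℝ] ℝ) (hA : ∀ r, ContDiff ℝ ∞ (A r))
    (B : ℕ → ℝ → G →L[ℝ] ℝ) (hB : ∀ i, ContDiff ℝ ∞ (B i))
    (braL : G →L[ℝ] G →L[ℝ] G) (ξ : ℝ → G) (hξ : ContDiff ℝ ∞ ξ)
    (π : ℝ → G →L[ℝ] ℝ)
    (hπ : π = fun t => ∑ i ∈ Finset.range k, (-1:ℝ)^i • iteratedDeriv i (B i) t) :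
    (∀ (h : ℝ → E) (σ : ℝ → G), ContDiff ℝ ∞ h → ContDiff ℝ ∞ σ →
      (∀ j < k, iteratedDeriv j h t₀ = 0 ∧ iteratedDeriv j h t₁ = 0) →
      (∀ j < k, iteratedDeriv j σ t₀ = 0 ∧ iteratedDeriv j σ t₁ = 0) →
      (∫ t in t₀..t₁,
        ((∑ r ∈ Finset.range (k+1), A r t (iteratedDeriv r h t)) +
          ∑ i ∈ Finset.range k,
            B i t (iteratedDeriv i (fun u => deriv σ u + braL (ξ u) (σ u)) t))) = 0) ↔
    ∀ t ∈ Set.Icc t₀ t₁,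
      (∑ r ∈ Finset.range (k+1), (-1:ℝ)^r • iteratedDeriv r (A r) t) = 0 ∧
        ∀ η : G, deriv π t η = π t (braL (ξ t) η) := by
  have hπs : ContDiff ℝ ∞ π := by
    rw [hπ]
    exact ContDiff.sum fun i _ => (smooth_iteratedDeriv' (hB i) i).const_smul _
  set EL : ℝ → E →L[ℝ] ℝ :=
    fun t => ∑ r ∈ Finset.range (k+1), (-1:ℝ)^r • iteratedDeriv r (A r) t with hEL
  have hELs : ContDiff ℝ ∞ EL :=
    ContDiff.sum fun r _ => (smooth_iteratedDeriv' (hA r) r).const_smul _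
  set Gm : ℝ → G →L[ℝ] ℝ := fun t => (π t).comp (braL (ξ t)) - deriv π t with hGm
  have hGmc : Continuous Gm := by
    apply Continuous.sub
    · exact hπs.continuous.clm_comp (braL.continuous.comp hξ.continuous)
    · exact hπs.continuous_deriv one_le_infty'
  -- the central computation
  have key : ∀ (h : ℝ → E) (σ : ℝ → G), ContDiff ℝ ∞ h → ContDiff ℝ ∞ σ →
      (∀ j < k, iteratedDeriv j h t₀ = 0 ∧ iteratedDeriv j h t₁ = 0) →
      (∀ j < k, iteratedDeriv j σ t₀ = 0 ∧ iteratedDeriv j σ t₁ = 0) →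
      (∫ t in t₀..t₁,
        ((∑ r ∈ Finset.range (k+1), A r t (iteratedDeriv r h t)) +
          ∑ i ∈ Finset.range k,
            B i t (iteratedDeriv i (fun u => deriv σ u + braL (ξ u) (σ u)) t)))
        = ∫ t in t₀..t₁, (EL t (h t) + Gm t (σ t)) := by
    intro h σ hh hσ hvh hvσ
    set w : ℝ → G := fun u => deriv σ u + braL (ξ u) (σ u) with hw
    have hσ' : ContDiff ℝ ∞ (deriv σ) := (contDiff_infty_iff_deriv.mp hσ).2
    have hbt : ContDiff ℝ ∞ (fun u => braL (ξ u) (σ u)) :=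
      ((braL.contDiff).comp hξ).clm_apply hσ
    have hws : ContDiff ℝ ∞ w := hσ'.add hbt
    have hwvan : ∀ j, j + 1 < k → iteratedDeriv j w t₀ = 0 ∧ iteratedDeriv j w t₁ = 0 := by
      intro j hj
      have hterm : ∀ c : ℝ, (∀ l < k, iteratedDeriv l σ c = 0) → iteratedDeriv j w c = 0 := by
        intro c hvc
        rw [hw]
        rw [iteratedDeriv_add_apply'' hσ' hbt c]
        rw [iteratedDeriv_bilin_eq_zero braL j ξ σ hξ hσ (fun l hl => hvc l (by omega))]
        rw [← iteratedDeriv_succ', hvc (j+1) hj, add_zero]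
      exact ⟨hterm t₀ (fun l hl => (hvσ l hl).1), hterm t₁ (fun l hl => (hvσ l hl).2)⟩
    -- integrability facts
    have intS1 : ∀ r, IntervalIntegrable (fun t => A r t (iteratedDeriv r h t)) volume t₀ t₁ :=
      fun r => ((hA r).continuous.clm_apply
        (smooth_iteratedDeriv' hh r).continuous).intervalIntegrable t₀ t₁
    have intS2 : ∀ i, IntervalIntegrable (fun t => B i t (iteratedDeriv i w t)) volume t₀ t₁ :=
      fun i => ((hB i).continuous.clm_apply
        (smooth_iteratedDeriv' hws i).continuous).intervalIntegrable t₀ t₁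
    have intS1' : IntervalIntegrable
        (fun t => ∑ r ∈ Finset.range (k+1), A r t (iteratedDeriv r h t)) volume t₀ t₁ :=
      (continuous_finset_sum _ (fun r _ => (hA r).continuous.clm_apply
        (smooth_iteratedDeriv' hh r).continuous)).intervalIntegrable t₀ t₁
    have intS2' : IntervalIntegrable
        (fun t => ∑ i ∈ Finset.range k, B i t (iteratedDeriv i w t)) volume t₀ t₁ :=
      (continuous_finset_sum _ (fun i _ => (hB i).continuous.clm_apply
        (smooth_iteratedDeriv' hws i).continuous)).intervalIntegrable t₀ t₁
    have intEL : IntervalIntegrable (fun t => EL t (h t)) volume t₀ t₁ :=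
      (hELs.continuous.clm_apply hh.continuous).intervalIntegrable t₀ t₁
    have intGm : IntervalIntegrable (fun t => Gm t (σ t)) volume t₀ t₁ :=
      (hGmc.clm_apply hσ.continuous).intervalIntegrable t₀ t₁
    -- step 1 : horizontal part
    have e1 : (∫ t in t₀..t₁, ∑ r ∈ Finset.range (k+1), A r t (iteratedDeriv r h t))
        = ∫ t in t₀..t₁, EL t (h t) := by
      rw [intervalIntegral.integral_finset_sum (fun r _ => intS1 r)]
      have step : ∀ r ∈ Finset.range (k+1),
          (∫ t in t₀..t₁, A r t (iteratedDeriv r h t))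
            = ∫ t in t₀..t₁, ((-1:ℝ)^r • iteratedDeriv r (A r) t) (h t) := by
        intro r hr
        rw [ibp_iter t₀ t₁ r (A r) h (hA r) hh
          (fun j hj => hvh j (lt_of_lt_of_le hj (Nat.lt_succ_iff.mp (Finset.mem_range.mp hr))))]
        rw [← intervalIntegral.integral_smul]
        apply intervalIntegral.integral_congr
        intro t _
        simp
      rw [Finset.sum_congr rfl step]
      rw [← intervalIntegral.integral_finset_sum
        (f := fun r t => ((-1:ℝ)^r • iteratedDeriv r (A r) t) (h t)) (fun r _ =>
        (((smooth_iteratedDeriv' (hA r) r).continuous.const_smul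
          ((-1:ℝ)^r)).clm_apply hh.continuous).intervalIntegrable t₀ t₁)]
      apply intervalIntegral.integral_congr
      intro t _
      simp [hEL, ContinuousLinearMap.sum_apply]
    -- step 2 : vertical part, integration by parts to π
    have e2 : (∫ t in t₀..t₁, ∑ i ∈ Finset.range k, B i t (iteratedDeriv i w t))
        = ∫ t in t₀..t₁, π t (w t) := by
      rw [intervalIntegral.integral_finset_sum (fun i _ => intS2 i)]
      have step : ∀ i ∈ Finset.range k,
          (∫ t in t₀..t₁, B i t (iteratedDeriv i w t))
            = ∫ t in t₀..t₁, ((-1:ℝ)^i • iteratedDeriv i (B i) t) (w t) := by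
        intro i hi
        rw [ibp_iter t₀ t₁ i (B i) w (hB i) hws
          (fun j hj => hwvan j (by have := Finset.mem_range.mp hi; omega))]
        rw [← intervalIntegral.integral_smul]
        apply intervalIntegral.integral_congr
        intro t _
        simp
      rw [Finset.sum_congr rfl step]
      rw [← intervalIntegral.integral_finset_sum
        (f := fun i t => ((-1:ℝ)^i • iteratedDeriv i (B i) t) (w t)) (fun i _ =>
        (((smooth_iteratedDeriv' (hB i) i).continuous.const_smul
          ((-1:ℝ)^i)).clm_apply hws.continuous).intervalIntegrable t₀ t₁)]
      apply intervalIntegral.integral_congr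
      intro t _
      simp [hπ, ContinuousLinearMap.sum_apply]
    -- step 3 : one more integration by parts
    have e3 : (∫ t in t₀..t₁, π t (w t)) = ∫ t in t₀..t₁, Gm t (σ t) := by
      have int_a : IntervalIntegrable (fun t => π t (deriv σ t)) volume t₀ t₁ :=
        (hπs.continuous.clm_apply hσ'.continuous).intervalIntegrable t₀ t₁
      have int_b : IntervalIntegrable (fun t => π t (braL (ξ t) (σ t))) volume t₀ t₁ :=
        (hπs.continuous.clm_apply hbt.continuous).intervalIntegrable t₀ t₁
      have int_c : IntervalIntegrable (fun t => deriv π t (σ t)) volume t₀ t₁ :=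
        ((hπs.continuous_deriv one_le_infty').clm_apply hσ.continuous).intervalIntegrable t₀ t₁
      have hsplit : (∫ t in t₀..t₁, π t (w t))
          = (∫ t in t₀..t₁, π t (deriv σ t)) + ∫ t in t₀..t₁, π t (braL (ξ t) (σ t)) := by
        rw [← intervalIntegral.integral_add int_a int_b]
        apply intervalIntegral.integral_congr
        intro t _
        rw [hw]
        simp
      have hibp : (∫ t in t₀..t₁, π t (deriv σ t)) = - ∫ t in t₀..t₁, deriv π t (σ t) := by
        have h1 := ibp_iter t₀ t₁ 1 π σ hπs hσ (fun j hj => by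
          have : j = 0 := by omega
          subst this
          refine ⟨?_, ?_⟩ <;> rw [iteratedDeriv_zero]
          · exact (by simpa [iteratedDeriv_zero] using (hvσ 0 hk).1)
          · exact (by simpa [iteratedDeriv_zero] using (hvσ 0 hk).2))
        rw [iteratedDeriv_one] at h1
        simpa using h1
      rw [hsplit, hibp, neg_add_eq_sub, ← intervalIntegral.integral_sub int_b int_c]
      apply intervalIntegral.integral_congr
      intro t _
      simp [hGm]
    calc (∫ t in t₀..t₁,
        ((∑ r ∈ Finset.range (k+1), A r t (iteratedDeriv r h t)) +
          ∑ i ∈ Finset.range k, B i t (iteratedDeriv i w t)))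
        = (∫ t in t₀..t₁, ∑ r ∈ Finset.range (k+1), A r t (iteratedDeriv r h t))
          + ∫ t in t₀..t₁, ∑ i ∈ Finset.range k, B i t (iteratedDeriv i w t) :=
          intervalIntegral.integral_add intS1' intS2'
      _ = (∫ t in t₀..t₁, EL t (h t)) + ∫ t in t₀..t₁, Gm t (σ t) := by rw [e1, e2, e3]
      _ = ∫ t in t₀..t₁, (EL t (h t) + Gm t (σ t)) :=
          (intervalIntegral.integral_add intEL intGm).symm
  constructor
  · intro Hvar
    have hz : ∀ (V : Type) (j : ℕ) (c : ℝ), True := fun _ _ _ => trivial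
    have hzE : ∀ (j : ℕ) (c : ℝ), iteratedDeriv j (fun _ : ℝ => (0:E)) c = 0 :=
      fun j c => eventuallyEq_zero_iteratedDeriv (by filter_upwards with x; simp) j
    have hzG : ∀ (j : ℕ) (c : ℝ), iteratedDeriv j (fun _ : ℝ => (0:G)) c = 0 :=
      fun j c => eventuallyEq_zero_iteratedDeriv (by filter_upwards with x; simp) j
    have hEL0 : ∀ t ∈ Set.Icc t₀ t₁, EL t = 0 := by
      apply flcv_clm ht hELs.continuous k
      intro h hh hv
      have h1 := Hvar h (fun _ => 0) hh contDiff_const hv (fun j _ => ⟨hzG _ _, hzG _ _⟩)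
      have h2 := key h (fun _ => 0) hh contDiff_const hv (fun j _ => ⟨hzG _ _, hzG _ _⟩)
      rw [h2] at h1
      rw [← h1]
      apply intervalIntegral.integral_congr
      intro t _
      simp
    have hG0 : ∀ t ∈ Set.Icc t₀ t₁, Gm t = 0 := by
      apply flcv_clm ht hGmc k
      intro σ hσ hv
      have h1 := Hvar (fun _ => 0) σ contDiff_const hσ (fun j _ => ⟨hzE _ _, hzE _ _⟩) hv
      have h2 := key (fun _ => 0) σ contDiff_const hσ (fun j _ => ⟨hzE _ _, hzE _ _⟩) hv
      rw [h2] at h1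
      rw [← h1]
      apply intervalIntegral.integral_congr
      intro t _
      simp
    intro t ht'
    refine ⟨hEL0 t ht', fun η => ?_⟩
    have h3 := ContinuousLinearMap.ext_iff.mp (hG0 t ht') η
    simp only [hGm, ContinuousLinearMap.sub_apply, ContinuousLinearMap.comp_apply,
      ContinuousLinearMap.zero_apply, sub_eq_zero] at h3
    exact h3.symm
  · intro Heq h σ hh hσ hvh hvσ
    rw [key h σ hh hσ hvh hvσ]
    have heq0 : Set.EqOn (fun t => EL t (h t) + Gm t (σ t)) (fun _ => (0:ℝ))
        (Set.uIcc t₀ t₁) := by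
      rw [Set.uIcc_of_le ht.le]
      intro t ht'
      obtain ⟨e1, e2⟩ := Heq t ht'
      have e1' : EL t = 0 := by simp only [hEL]; exact e1
      simp only
      rw [e1']
      simp [hGm, e2 (σ t)]
    rw [intervalIntegral.integral_congr heq0]
    simp

end VarAux

/-- **Higher-order Lagrange–Poincaré equations for a trivial principal bundle characterize
critical points.**  The Lie algebra `𝔤` is modeled as a finite-dimensional real normed space
with a bilinear, skew-symmetric bracket `bra` satisfying the Jacobi identity.  For a smooth
Lagrangian `L` on `(Fin (k+1) → ℝ^n) × (Fin k → 𝔤)` and smooth curves `m`, `ξ` with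
`X t = (jet_k m t, Jξ t)`, the vanishing of the first variation for all variations
`(h, σ)` whose derivatives of orders `0,…,k-1` vanish at the endpoints is equivalent to the
higher-order Lagrange–Poincaré equations: the horizontal Euler–Lagrange equation
`∑_{r=0}^{k} (−1)^r D^r[t ↦ ∂ᵐ_r L(X t)] = 0` together with the Euler–Poincaré equation
`π'(t)(η) = π(t)([ξ t, η])` for `π(t) = ∑_{r=1}^{k} (−1)^{r−1} D^{r−1}[t ↦ ∂^ξ_r L(X t)](t)`. -/
theorem lagrange_poincare_iff_critical {𝔤 : Type*} [NormedAddCommGroup 𝔤] [NormedSpace ℝ 𝔤]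
    [FiniteDimensional ℝ 𝔤]
    (bra : 𝔤 →ₗ[ℝ] 𝔤 →ₗ[ℝ] 𝔤)
    (hskew : ∀ x y : 𝔤, bra x y = - bra y x)
    (hjac : ∀ x y z : 𝔤, bra x (bra y z) + bra y (bra z x) + bra z (bra x y) = 0)
    (n k : ℕ) (hn : 1 ≤ n) (hk : 1 ≤ k) (t₀ t₁ : ℝ) (ht : t₀ < t₁)
    (L : (Fin (k + 1) → EuclideanSpace ℝ (Fin n)) × (Fin k → 𝔤) → ℝ)
    (hL : ContDiff ℝ (⊤ : ℕ∞) L)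
    (m : ℝ → EuclideanSpace ℝ (Fin n)) (hm : ContDiff ℝ (⊤ : ℕ∞) m)
    (ξ : ℝ → 𝔤) (hξ : ContDiff ℝ (⊤ : ℕ∞) ξ)
    (X : ℝ → (Fin (k + 1) → EuclideanSpace ℝ (Fin n)) × (Fin k → 𝔤))
    (hX : X = fun t => (jet k m t, rjet k ξ t))
    (π : ℝ → 𝔤 →L[ℝ] ℝ)
    (hπ : π = fun t => ∑ i ∈ Finset.range k,
        (-1 : ℝ) ^ i • iteratedDeriv i (fun u => pdFib L i (X u)) t) :
    (∀ (h : ℝ → EuclideanSpace ℝ (Fin n)) (σ : ℝ → 𝔤),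
        ContDiff ℝ (⊤ : ℕ∞) h → ContDiff ℝ (⊤ : ℕ∞) σ →
        (∀ j < k, iteratedDeriv j h t₀ = 0 ∧ iteratedDeriv j h t₁ = 0) →
        (∀ j < k, iteratedDeriv j σ t₀ = 0 ∧ iteratedDeriv j σ t₁ = 0) →
        (∫ t in t₀..t₁,
          ((∑ r ∈ Finset.range (k + 1), pdBase L r (X t) (iteratedDeriv r h t)) +
            ∑ i ∈ Finset.range k,
              pdFib L i (X t)
                (iteratedDeriv i (fun u => deriv σ u + bra (ξ u) (σ u)) t))) = 0) ↔
      ∀ t ∈ Set.Icc t₀ t₁,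
        (∑ r ∈ Finset.range (k + 1),
            (-1 : ℝ) ^ r • iteratedDeriv r (fun u => pdBase L r (X u)) t) = 0 ∧
          ∀ η : 𝔤, deriv π t η = π t (bra (ξ t) η) := by
  classical
  set braL : 𝔤 →L[ℝ] 𝔤 →L[ℝ] 𝔤 :=
    LinearMap.toContinuousLinearMap
      ((LinearMap.toContinuousLinearMap :
        (𝔤 →ₗ[ℝ] 𝔤) ≃ₗ[ℝ] (𝔤 →L[ℝ] 𝔤)).toLinearMap.comp bra) with hbraL
  have braL_apply : ∀ x y : 𝔤, braL x y = bra x y := by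
    intro x y
    rw [hbraL]
    rw [LinearMap.coe_toContinuousLinearMap']
    simp
  have hXs : ContDiff ℝ ∞ X := by
    rw [hX]
    refine ContDiff.prodMk ?_ ?_
    · exact contDiff_pi.mpr fun r => smooth_iteratedDeriv' hm r
    · exact contDiff_pi.mpr fun i => smooth_iteratedDeriv' hξ i
  have hfd : ContDiff ℝ ∞ (fun t => fderiv ℝ L (X t)) :=
    (hL.fderiv_right (by exact_mod_cast le_top)).comp hXs
  have hA : ∀ r : ℕ, ContDiff ℝ ∞ (fun t => pdBase L r (X t)) := by
    intro r
    unfold pdBase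
    by_cases hr : r < k + 1
    · simp only [dif_pos hr]
      exact hfd.clm_comp contDiff_const
    · simp only [dif_neg hr]
      exact contDiff_const
  have hB : ∀ i : ℕ, ContDiff ℝ ∞ (fun t => pdFib L i (X t)) := by
    intro i
    unfold pdFib
    by_cases hi : i < k
    · simp only [dif_pos hi]
      exact hfd.clm_comp contDiff_const
    · simp only [dif_neg hi]
      exact contDiff_const
  have main := variational_iff k hk t₀ t₁ ht (fun r t => pdBase L r (X t)) hA
    (fun i t => pdFib L i (X t)) hB braL ξ hξ π hπ
  simp only [← braL_apply]
  exact main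

end
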